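/- Let f : S² → ℙ(ℂ³) be defined by f(X,Y,Z) = [X−iY : √2·i·Z : X+iY] for real triples with X²+Y²+Z²=1. Then for any two such triples v=(X,Y,Z) and w=(X',Y',Z'), f(v)=f(w) if and only if w = v or w = −v. Consequently f induces a bijection from the quotient of the unit sphere S² ⊂ ℝ³ by the antipodal map onto the set 𝓛₂ := { [X−iY : √2·i·Z : X+iY] : X,Y,Z ∈ ℝ, X²+Y²+Z²=1 }, so 𝓛₂ is in bijection with the real projective plane ℝP². -/

import Mathlib

open Complex

/-- The vector `(X - iY, √2 i Z, X + iY)` in `ℂ³`. -/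
noncomputable def sphereVec (X Y Z : ℝ) : Fin 3 → ℂ :=
  ![(X : ℂ) - Complex.I * Y, (Real.sqrt 2 : ℂ) * Complex.I * Z, (X : ℂ) + Complex.I * Y]

lemma sphereVec_ne_zero {X Y Z : ℝ} (h : X ^ 2 + Y ^ 2 + Z ^ 2 = 1) :
    sphereVec X Y Z ≠ 0 := by
  intro h0
  have h0' : (X : ℂ) - Complex.I * Y = 0 := congrFun h0 0
  have h2' : (X : ℂ) + Complex.I * Y = 0 := congrFun h0 2
  have h1' : (Real.sqrt 2 : ℂ) * Complex.I * Z = 0 := congrFun h0 1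
  have hX : X = 0 := by
    have := congrArg Complex.re (by linear_combination h0' + h2' : (2 : ℂ) * X = 0)
    simpa using this
  have hY : Y = 0 := by
    have := congrArg Complex.im (by linear_combination h2' - h0' : (2 : ℂ) * Complex.I * Y = 0)
    simpa using this
  have hZ : Z = 0 := by
    rcases mul_eq_zero.mp h1' with h' | h'
    · rcases mul_eq_zero.mp h' with h'' | h''
      · exact absurd h'' (by simp [Complex.ext_iff, Real.sqrt_eq_zero'])
      · exact absurd h'' Complex.I_ne_zero
    · exact_mod_cast h'
  rw [hX, hY, hZ] at h
  norm_num at h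

/-- The Chiang-type lagrangian `𝓛₂ ⊆ ℙ(ℂ³)`, in its real description. -/
noncomputable def ChiangL2 : Set (Projectivization ℂ (Fin 3 → ℂ)) :=
  {P | ∃ (X Y Z : ℝ) (h : X ^ 2 + Y ^ 2 + Z ^ 2 = 1),
    P = Projectivization.mk ℂ (sphereVec X Y Z) (sphereVec_ne_zero h)}

/-- The unit sphere `S² ⊆ ℝ³` (as triples). -/
abbrev Sphere2 : Type := {v : ℝ × ℝ × ℝ // v.1 ^ 2 + v.2.1 ^ 2 + v.2.2 ^ 2 = 1}

/-- The antipodal equivalence relation on the unit sphere. -/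
def antipodalRel : Setoid Sphere2 where
  r v w := w.val = v.val ∨ w.val = -v.val
  iseqv := by
    constructor
    · exact fun v => Or.inl rfl
    · rintro v w (h | h)
      · exact Or.inl h.symm
      · exact Or.inr (by rw [h, neg_neg])
    · rintro v w u (h | h) (h' | h') <;> rw [h', h] <;> simp

lemma key {X Y Z X' Y' Z' : ℝ} (h : X ^ 2 + Y ^ 2 + Z ^ 2 = 1)
    (h' : X' ^ 2 + Y' ^ 2 + Z' ^ 2 = 1) :
    Projectivization.mk ℂ (sphereVec X Y Z) (sphereVec_ne_zero h) =
        Projectivization.mk ℂ (sphereVec X' Y' Z') (sphereVec_ne_zero h') ↔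
      ((X', Y', Z') = (X, Y, Z) ∨ (X', Y', Z') = (-X, -Y, -Z)) := by
  rw [Projectivization.mk_eq_mk_iff']
  constructor
  · rintro ⟨c, hc⟩
    have e0 := congrFun hc 0
    have e1 := congrFun hc 1
    have e2 := congrFun hc 2
    simp only [sphereVec, Pi.smul_apply, smul_eq_mul, Matrix.cons_val_zero, Matrix.cons_val_one,
      Matrix.head_cons, Matrix.cons_val_two, Matrix.tail_cons] at e0 e1 e2
    have hX : (X : ℂ) = c * X' := by linear_combination (-e0 - e2) / 2
    have hY : (Y : ℂ) = c * Y' := by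
      have hI : Complex.I * (Y : ℂ) = Complex.I * (c * Y') := by linear_combination (e0 - e2) / 2
      exact mul_left_cancel₀ Complex.I_ne_zero hI
    have hs2 : ((Real.sqrt 2 : ℝ) : ℂ) ≠ 0 := by
      simpa using (by positivity : Real.sqrt 2 ≠ 0)
    have hZ : (Z : ℂ) = c * Z' := by
      have hI : ((Real.sqrt 2 : ℝ) : ℂ) * Complex.I * (Z : ℂ)
          = ((Real.sqrt 2 : ℝ) : ℂ) * Complex.I * (c * Z') := by linear_combination -e1
      exact mul_left_cancel₀ (mul_ne_zero hs2 Complex.I_ne_zero) hI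
    have hc2 : c ^ 2 = 1 := by
      have hC : ((X : ℂ)) ^ 2 + (Y : ℂ) ^ 2 + (Z : ℂ) ^ 2 = 1 := by exact_mod_cast h
      have hC' : ((X' : ℂ)) ^ 2 + (Y' : ℂ) ^ 2 + (Z' : ℂ) ^ 2 = 1 := by exact_mod_cast h'
      calc c ^ 2 = c ^ 2 * ((X' : ℂ) ^ 2 + Y' ^ 2 + Z' ^ 2) := by rw [hC']; ring
        _ = (X : ℂ) ^ 2 + Y ^ 2 + Z ^ 2 := by rw [hX, hY, hZ]; ring
        _ = 1 := hC
    have hcc : (c - 1) * (c + 1) = 0 := by linear_combination hc2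
    rcases mul_eq_zero.mp hcc with hc1 | hc1
    · have hc1 : c = 1 := sub_eq_zero.mp hc1
      left
      subst hc1
      simp only [one_mul] at hX hY hZ
      have : X' = X ∧ Y' = Y ∧ Z' = Z := ⟨by exact_mod_cast hX.symm, by exact_mod_cast hY.symm,
        by exact_mod_cast hZ.symm⟩
      simp [Prod.ext_iff, this.1, this.2.1, this.2.2]
    · have hc1 : c = -1 := by linear_combination hc1
      right
      subst hc1
      have hX' : ((X' : ℂ)) = -X := by linear_combination hX
      have hY' : ((Y' : ℂ)) = -Y := by linear_combination hY
      have hZ' : ((Z' : ℂ)) = -Z := by linear_combination hZ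
      have : X' = -X ∧ Y' = -Y ∧ Z' = -Z := ⟨by exact_mod_cast hX', by exact_mod_cast hY',
        by exact_mod_cast hZ'⟩
      simp [Prod.ext_iff, this.1, this.2.1, this.2.2]
  · rintro (hp | hp)
    · obtain ⟨h1, h2, h3⟩ : X' = X ∧ Y' = Y ∧ Z' = Z := by simpa [Prod.ext_iff] using hp
      subst h1; subst h2; subst h3
      exact ⟨1, one_smul _ _⟩
    · obtain ⟨h1, h2, h3⟩ : X' = -X ∧ Y' = -Y ∧ Z' = -Z := by simpa [Prod.ext_iff] using hp
      subst h1; subst h2; subst h3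
      refine ⟨-1, ?_⟩
      funext i
      fin_cases i <;> simp [sphereVec] <;> push_cast <;> ring

/-- The map from the sphere to `𝓛₂`. -/
noncomputable def toL2fun (v : Sphere2) : ChiangL2 :=
  ⟨Projectivization.mk ℂ (sphereVec v.1.1 v.1.2.1 v.1.2.2) (sphereVec_ne_zero v.2),
    ⟨v.1.1, v.1.2.1, v.1.2.2, v.2, rfl⟩⟩

lemma toL2fun_eq_iff (v w : Sphere2) :
    toL2fun v = toL2fun w ↔ antipodalRel.r v w := by
  obtain ⟨⟨X, Y, Z⟩, hv⟩ := v
  obtain ⟨⟨X', Y', Z'⟩, hw⟩ := w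
  rw [Subtype.ext_iff]
  exact key hv hw

/-- The induced map `S²/± → 𝓛₂`. -/
noncomputable def quotToL2 : Quotient antipodalRel → ChiangL2 :=
  Quotient.lift toL2fun fun v w hvw => (toL2fun_eq_iff v w).mpr hvw

lemma quotToL2_bijective : Function.Bijective quotToL2 := by
  constructor
  · intro p q
    induction p using Quotient.ind
    induction q using Quotient.ind
    rename_i v w
    intro hpq
    exact Quotient.sound ((toL2fun_eq_iff v w).mp hpq)
  · rintro ⟨P, X, Y, Z, h, rfl⟩
    exact ⟨Quotient.mk antipodalRel ⟨(X, Y, Z), h⟩, rfl⟩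

/-- Euclidean length of a triple. -/
noncomputable def nrm (v : Fin 3 → ℝ) : ℝ := Real.sqrt (v 0 ^ 2 + v 1 ^ 2 + v 2 ^ 2)

lemma nrm_pos {v : Fin 3 → ℝ} (hv : v ≠ 0) : 0 < nrm v := by
  apply Real.sqrt_pos.mpr
  by_contra hle
  push_neg at hle
  have h0 : v 0 = 0 ∧ v 1 = 0 ∧ v 2 = 0 := by
    constructor
    · nlinarith [sq_nonneg (v 0), sq_nonneg (v 1), sq_nonneg (v 2)]
    constructor
    · nlinarith [sq_nonneg (v 0), sq_nonneg (v 1), sq_nonneg (v 2)]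
    · nlinarith [sq_nonneg (v 0), sq_nonneg (v 1), sq_nonneg (v 2)]
  apply hv
  funext i
  fin_cases i
  · exact h0.1
  · exact h0.2.1
  · exact h0.2.2

lemma nrm_sq {v : Fin 3 → ℝ} : nrm v ^ 2 = v 0 ^ 2 + v 1 ^ 2 + v 2 ^ 2 :=
  Real.sq_sqrt (by positivity)

lemma nrm_sphere {v : Fin 3 → ℝ} (hv : v ≠ 0) :
    (v 0 / nrm v) ^ 2 + (v 1 / nrm v) ^ 2 + (v 2 / nrm v) ^ 2 = 1 := by
  have h := nrm_pos hv
  field_simp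
  exact nrm_sq.symm

/-- Normalization map from nonzero vectors to the sphere mod antipodal. -/
noncomputable def sphereMk (v : {v : Fin 3 → ℝ // v ≠ 0}) : Quotient antipodalRel :=
  Quotient.mk antipodalRel
    ⟨(v.1 0 / nrm v.1, v.1 1 / nrm v.1, v.1 2 / nrm v.1), nrm_sphere v.2⟩

lemma nrm_smul (t : ℝ) (v : Fin 3 → ℝ) : nrm (t • v) = |t| * nrm v := by
  unfold nrm
  rw [show (t • v) 0 ^ 2 + (t • v) 1 ^ 2 + (t • v) 2 ^ 2
      = t ^ 2 * (v 0 ^ 2 + v 1 ^ 2 + v 2 ^ 2) by simp [Pi.smul_apply, smul_eq_mul]; ring]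
  rw [Real.sqrt_mul (sq_nonneg t), Real.sqrt_sq_eq_abs]

lemma sphereMk_welldef (a b : {v : Fin 3 → ℝ // v ≠ 0}) (t : ℝ) (hab : a = t • (b : Fin 3 → ℝ)) :
    sphereMk a = sphereMk b := by
  have ht : t ≠ 0 := by
    rintro rfl
    exact a.2 (by simpa using hab)
  have hval : (a : Fin 3 → ℝ) = t • (b : Fin 3 → ℝ) := hab
  have hnrm : nrm a.1 = |t| * nrm b.1 := by rw [hval, nrm_smul]
  have hb := nrm_pos b.2
  have habs : |t| ≠ 0 := abs_ne_zero.mpr ht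
  apply Quotient.sound
  rcases lt_or_gt_of_ne ht with htn | htp
  · right
    have habs' : |t| = -t := abs_of_neg htn
    show _ = -_
    rw [Prod.ext_iff, Prod.ext_iff]
    refine ⟨?_, ?_, ?_⟩ <;>
      · show _ / _ = -(_ / _)
        rw [hnrm, habs', hval]
        simp only [Pi.smul_apply, smul_eq_mul]
        field_simp
  · left
    have habs' : |t| = t := abs_of_pos htp
    rw [Prod.ext_iff, Prod.ext_iff]
    refine ⟨?_, ?_, ?_⟩ <;>
      · show _ / _ = _ / _
        rw [hnrm, habs', hval]
        simp only [Pi.smul_apply, smul_eq_mul]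
        rw [mul_div_mul_left _ _ ht]

/-- The induced map `ℝP² → S²/±`. -/
noncomputable def rp2ToQuot : Projectivization ℝ (Fin 3 → ℝ) → Quotient antipodalRel :=
  Projectivization.lift sphereMk sphereMk_welldef

lemma rp2ToQuot_bijective : Function.Bijective rp2ToQuot := by
  constructor
  · intro p q
    induction p using Projectivization.ind
    induction q using Projectivization.ind
    rename_i v hv w hw
    intro hpq
    have h := Quotient.exact (hpq : sphereMk ⟨v, hv⟩ = sphereMk ⟨w, hw⟩)
    rw [Projectivization.mk_eq_mk_iff']
    have hv' := nrm_pos hv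
    have hw' := nrm_pos hw
    rcases h with h | h
    · obtain ⟨h0, h1, h2⟩ : w 0 / nrm w = v 0 / nrm v ∧ w 1 / nrm w = v 1 / nrm v ∧
          w 2 / nrm w = v 2 / nrm v := by simpa [Prod.ext_iff] using h
      rw [div_eq_div_iff (ne_of_gt hw') (ne_of_gt hv')] at h0 h1 h2
      refine ⟨nrm v / nrm w, ?_⟩
      funext i
      fin_cases i
      · show nrm v / nrm w * w 0 = v 0
        field_simp
        linarith
      · show nrm v / nrm w * w 1 = v 1
        field_simp
        linarith
      · show nrm v / nrm w * w 2 = v 2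
        field_simp
        linarith
    · obtain ⟨h0, h1, h2⟩ : w 0 / nrm w = -(v 0 / nrm v) ∧ w 1 / nrm w = -(v 1 / nrm v) ∧
          w 2 / nrm w = -(v 2 / nrm v) := by simpa [Prod.ext_iff] using h
      rw [← neg_div, div_eq_div_iff (ne_of_gt hw') (ne_of_gt hv')] at h0 h1 h2
      refine ⟨-(nrm v / nrm w), ?_⟩
      funext i
      fin_cases i
      · show -(nrm v / nrm w) * w 0 = v 0
        field_simp
        linarith
      · show -(nrm v / nrm w) * w 1 = v 1
        field_simp
        linarith
      · show -(nrm v / nrm w) * w 2 = v 2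
        field_simp
        linarith
  · intro q
    induction q using Quotient.ind
    rename_i s
    obtain ⟨⟨X, Y, Z⟩, hs⟩ := s
    have hvne : (![X, Y, Z] : Fin 3 → ℝ) ≠ 0 := by
      intro h0
      have h1 : X = 0 := congrFun h0 0
      have h2 : Y = 0 := congrFun h0 1
      have h3 : Z = 0 := congrFun h0 2
      rw [h1, h2, h3] at hs
      norm_num at hs
    refine ⟨Projectivization.mk ℝ ![X, Y, Z] hvne, ?_⟩
    show sphereMk ⟨![X, Y, Z], hvne⟩ = _
    unfold sphereMk
    apply congrArg
    apply Subtype.ext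
    have hn : nrm ![X, Y, Z] = 1 := by
      unfold nrm
      simp only [Matrix.cons_val_zero, Matrix.cons_val_one, Matrix.head_cons,
        Matrix.cons_val_two, Matrix.tail_cons]
      rw [hs, Real.sqrt_one]
    simp [hn]

theorem stmt_3 :
    (∀ (X Y Z X' Y' Z' : ℝ) (h : X ^ 2 + Y ^ 2 + Z ^ 2 = 1)
        (h' : X' ^ 2 + Y' ^ 2 + Z' ^ 2 = 1),
      Projectivization.mk ℂ (sphereVec X Y Z) (sphereVec_ne_zero h) =
          Projectivization.mk ℂ (sphereVec X' Y' Z') (sphereVec_ne_zero h') ↔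
        ((X', Y', Z') = (X, Y, Z) ∨ (X', Y', Z') = (-X, -Y, -Z))) ∧
    Nonempty (Quotient antipodalRel ≃ ↥ChiangL2) ∧
    Nonempty (Projectivization ℝ (Fin 3 → ℝ) ≃ ↥ChiangL2) := by
  refine ⟨fun X Y Z X' Y' Z' h h' => key h h', ⟨Equiv.ofBijective _ quotToL2_bijective⟩,
    ⟨Equiv.ofBijective (quotToL2 ∘ rp2ToQuot)
      (quotToL2_bijective.comp rp2ToQuot_bijective)⟩⟩
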